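/- Let G be a finite DAG whose set of sources is S₀, and let σ = (S₀ ⊕ σ₀ ⊕ S₁ ⊕ σ₁ ⊕ … ⊕ σ_{q-1} ⊕ S_q) be a partial proper schedule, i.e., (A') V(σ_i) = succ(S_i) \ (succ[S_{i+1}] ∪ sinks(G)) for all 0 ≤ i < q, and (B') S_j ⊆ succ(S_i) ∪ sinks(G) for all 0 ≤ i < j ≤ q. Then the set of non-sink jobs appearing in σ equals V(G) \ (succ(S_q) ∪ sinks(G)). -/

import Mathlib

/-- A feasible `m`-machine schedule of the job set `X`: a list of timeslots,
each of size at most `m`, pairwise disjoint, covering exactly `X`, such that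
whenever `prec u v`, job `u` is scheduled in a strictly earlier timeslot. -/
def IsSchedule {V : Type*} (prec : V → V → Prop) (m : ℕ)
    (X : Finset V) (σ : List (Finset V)) : Prop :=
  (∀ T ∈ σ, T.card ≤ m) ∧
  (∀ v, v ∈ X ↔ ∃ i : Fin σ.length, v ∈ σ.get i) ∧
  (∀ i j : Fin σ.length, i ≠ j → Disjoint (σ.get i) (σ.get j)) ∧
  (∀ i j : Fin σ.length, ∀ u ∈ σ.get i, ∀ v ∈ σ.get j, prec u v → (i : ℕ) < (j : ℕ))

/-- The set of strict successors of members of `S`. -/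
def succSet {V : Type*} (prec : V → V → Prop) (S : Set V) : Set V :=
  {v | ∃ s ∈ S, prec s v}

/-- `S` together with all strict predecessors of members of `S` (`pred[S]`). -/
def predCl {V : Type*} (prec : V → V → Prop) (S : Set V) : Set V :=
  S ∪ {v | ∃ s ∈ S, prec v s}

/-- The sinks of the subgraph induced on `S`: members of `S` with no
successor inside `S`. -/
def sinksIn {V : Type*} (prec : V → V → Prop) (S : Set V) : Set V :=
  {v | v ∈ S ∧ ∀ w ∈ S, ¬ prec v w}

/-- The sinks of the whole DAG: jobs with no successor. -/
def sinksOf {V : Type*} (prec : V → V → Prop) : Set V :=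
  {v | ∀ u, ¬ prec v u}

/-- For a partial proper schedule
`σ = (S₀ ⊕ σ₀ ⊕ S₁ ⊕ σ₁ ⊕ … ⊕ σ_{q-1} ⊕ S_q)` with `S₀` the set of all
sources, conditions (A') and (B') imply that the non-sink jobs of `σ` are
exactly `V(G) \ (succ(S_q) ∪ sinks(G))`. -/
lemma mem_foldr_union {V : Type*} [DecidableEq V] (l : List (Finset V)) (v : V) :
    v ∈ l.foldr (· ∪ ·) ∅ ↔ ∃ T ∈ l, v ∈ T := by
  induction l with
  | nil => simp
  | cons a l ih => simp [ih]

theorem stmt8 {V : Type*} [Fintype V] [DecidableEq V]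
    (prec : V → V → Prop) (htrans : Transitive prec) (hirr : Irreflexive prec)
    (m q : ℕ) (S : Fin (q + 1) → Finset V) (seg : Fin q → List (Finset V))
    (σ : List (Finset V))
    (hσ : σ = (List.ofFn fun i : Fin q => (S i.castSucc) :: seg i).flatten ++ [S (Fin.last q)])
    (hfeas : IsSchedule prec m (σ.foldr (· ∪ ·) ∅) σ)
    (hS0 : (↑(S 0) : Set V) = {v : V | ∀ u, ¬ prec u v})
    (hA' : ∀ i : Fin q, {v : V | ∃ T ∈ seg i, v ∈ T} =
      succSet prec ↑(S i.castSucc) \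
        (succSet prec ↑(S i.succ) ∪ ↑(S i.succ) ∪ sinksOf prec))
    (hB' : ∀ i j : Fin (q + 1), i < j →
      (↑(S j) : Set V) ⊆ succSet prec ↑(S i) ∪ sinksOf prec) :
    (↑(σ.foldr (· ∪ ·) ∅) : Set V) \ sinksOf prec =
      Set.univ \ (succSet prec ↑(S (Fin.last q)) ∪ sinksOf prec) := by
  classical
  -- no prec-edge inside any timeslot
  have hnoint : ∀ T ∈ σ, ∀ u ∈ T, ∀ w ∈ T, ¬ prec u w := by
    intro T hT u hu w hw hp
    obtain ⟨i, hi⟩ := List.mem_iff_get.mp hT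
    exact lt_irrefl (i : ℕ) (hfeas.2.2.2 i i u (hi ▸ hu) w (hi ▸ hw) hp)
  -- every S j is a timeslot of σ
  have hSmem : ∀ j : Fin (q + 1), S j ∈ σ := by
    intro j
    induction j using Fin.lastCases with
    | last => rw [hσ]; simp
    | cast i =>
      rw [hσ]
      refine List.mem_append_left _ (List.mem_flatten.mpr ⟨(S i.castSucc) :: seg i, ?_, ?_⟩)
      · simp [List.mem_ofFn]; exact ⟨i, rfl, rfl⟩
      · simp
  have hsegmem : ∀ i : Fin q, ∀ T ∈ seg i, T ∈ σ := by
    intro i T hT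
    rw [hσ]
    refine List.mem_append_left _ (List.mem_flatten.mpr ⟨(S i.castSucc) :: seg i, ?_, ?_⟩)
    · simp [List.mem_ofFn]; exact ⟨i, rfl, rfl⟩
    · simp [hT]
  -- succ sets are antitone
  have hmono : ∀ i j : Fin (q + 1), i ≤ j →
      succSet prec ↑(S j) ⊆ succSet prec ↑(S i) := by
    intro i j hij v hv
    rcases eq_or_lt_of_le hij with rfl | hlt
    · exact hv
    · obtain ⟨s, hs, hsv⟩ := hv
      rcases hB' i j hlt hs with hsucc | hsink
      · obtain ⟨t, ht, hts⟩ := hsucc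
        exact ⟨t, ht, htrans hts hsv⟩
      · exact absurd hsv (hsink v)
  -- members of any S j are not successors of S_q
  have hSnot : ∀ j : Fin (q + 1), ∀ v ∈ S j, v ∉ succSet prec ↑(S (Fin.last q)) := by
    intro j v hv ⟨s, hs, hsv⟩
    rcases eq_or_lt_of_le (Fin.le_last j) with hjq | hjq
    · exact hnoint (S j) (hSmem j) s (by rwa [hjq]) v hv hsv
    · rcases hB' j (Fin.last q) hjq hs with ⟨t, ht, hts⟩ | hsink
      · exact hnoint (S j) (hSmem j) t ht v hv (htrans hts hsv)
      · exact hsink v hsv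
  ext v
  simp only [Set.mem_diff, Set.mem_union, Set.mem_univ, true_and, Finset.mem_coe,
    mem_foldr_union, not_or]
  constructor
  · rintro ⟨⟨T, hTσ, hvT⟩, hvs⟩
    refine ⟨fun hvq => ?_, hvs⟩
    rw [hσ] at hTσ
    rcases List.mem_append.mp hTσ with hTf | hTl
    · obtain ⟨L, hL, hTL⟩ := List.mem_flatten.mp hTf
      obtain ⟨i, rfl⟩ := List.mem_ofFn.mp hL
      rcases List.mem_cons.mp hTL with rfl | hTseg
      · exact hSnot i.castSucc v hvT hvq
      · have : v ∈ {v : V | ∃ T ∈ seg i, v ∈ T} := ⟨T, hTseg, hvT⟩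
        rw [hA' i] at this
        exact this.2 (Or.inl (Or.inl (hmono i.succ (Fin.last q) (Fin.le_last _) hvq)))
    · simp only [List.mem_singleton] at hTl
      exact hSnot (Fin.last q) v (hTl ▸ hvT) hvq
  · rintro ⟨hvq, hvs⟩
    refine ⟨?_, hvs⟩
    by_cases hsrc : ∀ u, ¬ prec u v
    · have : v ∈ S 0 := by rw [← Finset.mem_coe, hS0]; exact hsrc
      exact ⟨S 0, hSmem 0, this⟩
    · -- v has a predecessor, hence v ∈ succ(S 0)
      push_neg at hsrc
      have hwf : WellFounded prec := by
        have : IsTrans V prec := ⟨htrans⟩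
        have : IsIrrefl V prec := ⟨hirr⟩
        exact Finite.wellFounded_of_trans_of_irrefl prec
      have hv0 : v ∈ succSet prec ↑(S 0) := by
        obtain ⟨u, hu, hmin⟩ := hwf.has_min {u | prec u v} hsrc
        refine ⟨u, ?_, hu⟩
        show u ∈ (↑(S 0) : Set V)
        rw [hS0]
        intro w hwu
        exact hmin w (htrans hwu hu) hwu
      -- find the first index where v drops out of succ(S i)
      have hstep : ∃ i : Fin q, v ∈ succSet prec ↑(S i.castSucc) ∧
          v ∉ succSet prec ↑(S i.succ) := by
        by_contra hno
        push_neg at hno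
        have hall : ∀ j : Fin (q + 1), v ∈ succSet prec ↑(S j) := by
          intro j
          induction j using Fin.induction with
          | zero => exact hv0
          | succ i ih => exact hno i ih
        exact hvq (hall (Fin.last q))
      obtain ⟨i, hvi, hvi1⟩ := hstep
      by_cases hvS : v ∈ S i.succ
      · exact ⟨S i.succ, hSmem i.succ, hvS⟩
      · have : v ∈ {v : V | ∃ T ∈ seg i, v ∈ T} := by
          rw [hA' i]
          refine ⟨hvi, ?_⟩
          rintro ((h | h) | h)
          · exact hvi1 h
          · exact hvS h
          · exact hvs h
        obtain ⟨T, hT, hvT⟩ := this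
        exact ⟨T, hsegmem i T hT, hvT⟩
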